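/- Let ν be a partition with m_i(ν) > 0 for some i and assume the vacancy number P_i(ν) ≥ 0 and that P_j(ν) > 0 for all j < ν_1 with m_j(ν) > 0. Then every equivalence class in 𝒥̄(ν)/⟨σ_j, constant shifts by L⟩ contains a representative J' with 0 ≤ J'_{1,i} ≤ J'_{2,i} ≤ ⋯ ≤ J'_{m_i,i} ≤ P_i(ν) for all i ∈ H. (Normalization of angle variables into the fundamental domain.) -/

import Mathlib

/-- The set `𝒥̄(ν)`: families `J i` of bi-infinite nondecreasing sequences
(one for each row length `i` with `m i ≠ 0`) with quasi-periodicity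
`J_{k+m_i} = J_k + P_i(ν)`. -/
def JbarSet (m : ℕ → ℕ) (P : ℕ → ℤ) : Set (ℕ → ℤ → ℤ) :=
  {J | ∀ i, m i ≠ 0 →
    (∀ k, J i k ≤ J i (k + 1)) ∧ ∀ k, J i (k + (m i : ℤ)) = J i k + P i}

/-- The operator `σ_j : (J_{k,i}) ↦ (J_{k+δ_{ij},i} + 2 min(i,j))`. -/
def sigmaB (j : ℕ) (J : ℕ → ℤ → ℤ) : ℕ → ℤ → ℤ :=
  fun i k => J i (k + if i = j then 1 else 0) + 2 * (min i j : ℤ)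

/-- Generators of the equivalence: the operators `σ_j` and the constant shifts
`J ↦ J - d` (corresponding to cyclic shifts `T₁^d` of the path). -/
def shiftRel (A B : ℕ → ℤ → ℤ) : Prop :=
  (∃ j, B = sigmaB j A) ∨ (∃ d : ℤ, ∀ i k, B i k = A i k - d)

lemma exists_interval (f : ℤ → ℤ) (M p : ℤ) (hp : 1 ≤ p)
    (hmono : ∀ k, f k ≤ f (k + 1)) (hper : ∀ k, f (k + M) = f k + p) (y : ℤ) :
    ∃ k, f k ≤ y ∧ y ≤ f (k + 1) := by
  have monoN : ∀ (a : ℤ) (n : ℕ), f a ≤ f (a + n) := by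
    intro a n
    induction n with
    | zero => simp
    | succ n ih =>
      have h1 := hmono (a + n)
      have harg : a + (n : ℤ) + 1 = a + ((n + 1 : ℕ) : ℤ) := by push_cast; ring
      rw [harg] at h1
      exact le_trans ih h1
  have mono : ∀ a b : ℤ, a ≤ b → f a ≤ f b := by
    intro a b hab
    have h1 := monoN a (b - a).toNat
    rwa [show a + ((b - a).toNat : ℤ) = b by omega] at h1
  have hperN : ∀ (c : ℕ) (k : ℤ), f (k + c * M) = f k + c * p := by
    intro c
    induction c with
    | zero => simp
    | succ c ih =>
      intro k
      have h1 : (((c : ℕ) + 1 : ℕ) : ℤ) * M = (c : ℤ) * M + M := by push_cast; ring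
      have h2 : k + ((c : ℤ) * M + M) = (k + c * M) + M := by ring
      rw [h1, h2, hper, ih]; push_cast; ring
  have hlow : ∃ k, f k ≤ y := by
    set c : ℕ := (f 0 - y).toNat with hc
    have hcy : f 0 - y ≤ (c : ℤ) := Int.self_le_toNat _
    refine ⟨-(c * M), ?_⟩
    have h1 := hperN c (-(c * M))
    rw [show (-(c * M) + c * M : ℤ) = 0 by ring] at h1
    have hcp : (c : ℤ) ≤ (c : ℤ) * p := le_mul_of_one_le_right (Int.ofNat_nonneg c) hp
    linarith
  have hbdd : ∃ b : ℤ, ∀ z : ℤ, f z ≤ y → z ≤ b := by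
    set c : ℕ := (y - f 0 + 1).toNat with hc
    have hcy : y - f 0 + 1 ≤ (c : ℤ) := Int.self_le_toNat _
    refine ⟨c * M, fun z hz => ?_⟩
    by_contra hlt
    push_neg at hlt
    have h1 : f (c * M) ≤ f z := mono _ _ (le_of_lt hlt)
    have h2 := hperN c 0
    rw [zero_add] at h2
    have hcp : (c : ℤ) ≤ (c : ℤ) * p := le_mul_of_one_le_right (Int.ofNat_nonneg c) hp
    linarith
  obtain ⟨k, hk, hmax⟩ := Int.exists_greatest_of_bdd hbdd hlow
  refine ⟨k, hk, ?_⟩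
  by_contra h
  push_neg at h
  exact absurd (hmax (k + 1) (le_of_lt h)) (by omega)

open Classical in
noncomputable def pickAux (f : ℤ → ℤ) (y : ℤ) : ℤ :=
  if h : ∃ k, f k ≤ y ∧ y ≤ f (k + 1) then h.choose else 0

lemma pickAux_spec {f : ℤ → ℤ} {y : ℤ} (h : ∃ k, f k ≤ y ∧ y ≤ f (k + 1)) :
    f (pickAux f y) ≤ y ∧ y ≤ f (pickAux f y + 1) := by
  rw [pickAux, dif_pos h]
  exact h.choose_spec

noncomputable def stAux (c : ℕ → ℤ → ℤ) (y0 : ℤ) : ℕ → ℤ × ℤ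
  | 0 => (0, y0)
  | t + 1 =>
    ((stAux c y0 t).1 + c t (stAux c y0 t).2,
     (stAux c y0 t).2 + 2 * ((stAux c y0 t).1 + c t (stAux c y0 t).2))

noncomputable def cDef (m : ℕ → ℕ) (J : ℕ → ℤ → ℤ) (N : ℕ) : ℕ → ℤ → ℤ :=
  fun t y => if t ≠ 0 ∧ m (N - t) ≠ 0 then pickAux (J (N - t)) y else 0

noncomputable def stDef (m : ℕ → ℕ) (J : ℕ → ℤ → ℤ) (N : ℕ) : ℕ → ℤ × ℤ :=
  stAux (cDef m J N) (J N 0)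

noncomputable def nDef (m : ℕ → ℕ) (J : ℕ → ℤ → ℤ) (N : ℕ) : ℕ → ℤ :=
  fun i => if i < N ∧ m i ≠ 0 then pickAux (J i) ((stDef m J N (N - i)).2) else 0

lemma eqv_shift (A : ℕ → ℤ → ℤ) (d : ℤ) :
    Relation.EqvGen shiftRel A (fun i k => A i k - d) :=
  Relation.EqvGen.rel _ _ (Or.inr ⟨d, fun _ _ => rfl⟩)

lemma eqv_sigmaZ (j : ℕ) (z : ℤ) (A : ℕ → ℤ → ℤ) :
    Relation.EqvGen shiftRel A
      (fun i k => A i (k + if i = j then z else 0) + 2 * min (i : ℤ) (j : ℤ) * z) := by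
  induction z using Int.induction_on with
  | zero =>
    have h0 : (fun i k => A i (k + if i = j then (0:ℤ) else 0) + 2 * min (i : ℤ) (j : ℤ) * 0) = A := by
      funext i k; split_ifs <;> simp
    rw [h0]
    exact Relation.EqvGen.refl A
  | succ z ih =>
    have heq : (fun i k => A i (k + if i = j then ((z : ℤ) + 1) else 0) + 2 * min (i : ℤ) (j : ℤ) * ((z : ℤ) + 1))
        = sigmaB j (fun i k => A i (k + if i = j then (z : ℤ) else 0) + 2 * min (i : ℤ) (j : ℤ) * z) := by
      funext i k
      simp only [sigmaB]
      by_cases hij : i = j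
      · subst hij
        simp only [eq_self_iff_true, if_true]
        rw [show k + 1 + (z : ℤ) = k + ((z : ℤ) + 1) by ring]
        ring
      · simp only [if_neg hij]; ring
    rw [heq]
    exact Relation.EqvGen.trans _ _ _ ih (Relation.EqvGen.rel _ _ (Or.inl ⟨j, rfl⟩))
  | pred z ih =>
    have heq : (fun i k => A i (k + if i = j then (-(z : ℤ)) else 0) + 2 * min (i : ℤ) (j : ℤ) * (-(z : ℤ)))
        = sigmaB j (fun i k => A i (k + if i = j then (-(z : ℤ) - 1) else 0) + 2 * min (i : ℤ) (j : ℤ) * (-(z : ℤ) - 1)) := by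
      funext i k
      simp only [sigmaB]
      by_cases hij : i = j
      · subst hij
        simp only [eq_self_iff_true, if_true]
        rw [show k + 1 + (-(z : ℤ) - 1) = k + (-(z : ℤ)) by ring]
        ring
      · simp only [if_neg hij]; ring
    exact Relation.EqvGen.trans _ _ _ ih
      (Relation.EqvGen.symm _ _ (heq ▸ Relation.EqvGen.rel _ _ (Or.inl ⟨j, rfl⟩)))

lemma eqv_sigmaF (n : ℕ → ℤ) (A : ℕ → ℤ → ℤ) (F : Finset ℕ) :
    Relation.EqvGen shiftRel A
      (fun i k => A i (k + if i ∈ F then n i else 0)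
        + 2 * ∑ j ∈ F, min (i : ℤ) (j : ℤ) * n j) := by
  induction F using Finset.induction_on with
  | empty =>
    have h0 : (fun i k => A i (k + if i ∈ (∅ : Finset ℕ) then n i else 0)
        + 2 * ∑ j ∈ (∅ : Finset ℕ), min (i : ℤ) (j : ℤ) * n j) = A := by
      funext i k; simp
    rw [h0]; exact Relation.EqvGen.refl A
  | @insert j F hj ih =>
    set B := (fun i k => A i (k + if i ∈ F then n i else 0)
        + 2 * ∑ j ∈ F, min (i : ℤ) (j : ℤ) * n j) with hB
    have heq : (fun i k => A i (k + if i ∈ insert j F then n i else 0)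
        + 2 * ∑ j' ∈ insert j F, min (i : ℤ) (j' : ℤ) * n j')
        = (fun i k => B i (k + if i = j then n j else 0) + 2 * min (i : ℤ) (j : ℤ) * n j) := by
      funext i k
      simp only [hB, Finset.sum_insert hj, Finset.mem_insert]
      by_cases hij : i = j
      · subst hij
        simp only [eq_self_iff_true, true_or, if_true, if_neg hj]
        ring
      · simp only [if_neg hij]
        by_cases hiF : i ∈ F
        · simp only [if_pos hiF, if_pos (Or.inr hiF : i = j ∨ i ∈ F)]; ring
        · simp only [if_neg hiF, if_neg (by tauto : ¬(i = j ∨ i ∈ F))]; ring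
    rw [heq]
    exact Relation.EqvGen.trans _ _ _ ih (eqv_sigmaZ j (n j) B)


/-- Normalization into the fundamental domain: if the vacancy numbers satisfy
`P_i ≥ 0` for all occurring row lengths and `P_j > 0` for all occurring `j`
smaller than the longest row length `ν₁`, then every `J ∈ 𝒥̄(ν)` is
equivalent, under the group generated by the `σ_j` and constant shifts, to a
representative `J'` with `0 ≤ J'_{1,i} ≤ ⋯ ≤ J'_{m_i,i} ≤ P_i` for every `i`
with `m i ≠ 0`. -/
theorem stmt18 (m : ℕ → ℕ) (P : ℕ → ℤ)
    (hfin : {i | m i ≠ 0}.Finite) (hne : {i | m i ≠ 0}.Nonempty)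
    (hP0 : ∀ i, m i ≠ 0 → 0 ≤ P i)
    (hPpos : ∀ j, m j ≠ 0 → (∃ i, m i ≠ 0 ∧ j < i) → 0 < P j)
    (J : ℕ → ℤ → ℤ) (hJ : J ∈ JbarSet m P) :
    ∃ K : ℕ → ℤ → ℤ, Relation.EqvGen shiftRel J K ∧
      ∀ i, m i ≠ 0 →
        0 ≤ K i 1 ∧ (∀ k : ℤ, 1 ≤ k → k < m i → K i k ≤ K i (k + 1)) ∧
        K i (m i) ≤ P i := by
  classical
  have hFne : hfin.toFinset.Nonempty := by
    rwa [Set.Finite.toFinset_nonempty]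
  set N := hfin.toFinset.max' hFne with hN
  have hmN : m N ≠ 0 := by
    have := hfin.toFinset.max'_mem hFne
    simpa [Set.Finite.mem_toFinset] using this
  have hle : ∀ i, m i ≠ 0 → i ≤ N := fun i hi =>
    Finset.le_max' _ i (by simpa [Set.Finite.mem_toFinset] using hi)
  have hex : ∀ i, m i ≠ 0 → i < N → ∀ y : ℤ, ∃ k, J i k ≤ y ∧ y ≤ J i (k + 1) := by
    intro i hi hiN y
    have hPi : 0 < P i := hPpos i hi ⟨N, hmN, hiN⟩
    exact exists_interval (J i) (m i) (P i) hPi (hJ i hi).1 (hJ i hi).2 y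
  set st := stDef m J N with hst
  set n := nDef m J N with hn'
  set F := Finset.range (N + 1) with hF
  set d : ℤ := J N 0 + 2 * ∑ j ∈ F, (j : ℤ) * n j with hd
  -- step identity
  have hstep1 : ∀ t, t ≤ N → (st (t + 1)).1 = (st t).1 + n (N - t) := by
    intro t ht
    have h1 : (st (t + 1)).1 = (st t).1 + cDef m J N t (st t).2 := by
      rw [hst, stDef]
      simp only [stAux]
    rw [h1]
    congr 1
    rw [cDef, hn']
    by_cases h0 : t = 0
    · subst h0
      simp only [nDef, Nat.sub_zero]
      rw [if_neg (by simp), if_neg (by omega)]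
    · have h2 : N - t < N := by omega
      have h3 : N - (N - t) = t := by omega
      by_cases h4 : m (N - t) ≠ 0
      · simp only [nDef]
        rw [if_pos ⟨h0, h4⟩, if_pos ⟨h2, h4⟩, h3, hst]
      · simp only [nDef]
        rw [if_neg (by tauto), if_neg (by tauto)]
  have hstep2 : ∀ t, (st (t + 1)).2 = (st t).2 + 2 * (st (t + 1)).1 := fun t => rfl
  -- main invariants
  have key : ∀ t, t ≤ N →
      (st t).1 = ∑ j ∈ F, (if N - t < j then n j else 0) ∧
      (st t).2 = d - 2 * ∑ j ∈ F, min ((N - t : ℕ) : ℤ) (j : ℤ) * n j := by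
    intro t
    induction t with
    | zero =>
      intro _
      constructor
      · have h1 : (st 0).1 = 0 := rfl
        rw [h1]
        exact (Finset.sum_eq_zero fun j hj => if_neg (by
          have := Finset.mem_range.1 hj; omega)).symm
      · have h1 : (st 0).2 = J N 0 := rfl
        rw [h1, hd]
        have h2 : ∑ j ∈ F, min ((N - 0 : ℕ) : ℤ) (j : ℤ) * n j = ∑ j ∈ F, (j : ℤ) * n j := by
          refine Finset.sum_congr rfl fun j hj => ?_
          have hjN := Finset.mem_range.1 hj
          rw [min_eq_right (by omega : (j : ℤ) ≤ ((N - 0 : ℕ) : ℤ))]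
        rw [h2]; ring
    | succ t ih =>
      intro ht
      have ht' : t ≤ N := Nat.le_of_succ_le ht
      obtain ⟨ihA, ihB⟩ := ih ht'
      have hmem : N - t ∈ F := Finset.mem_range.2 (by omega)
      have hA : (st (t + 1)).1 = ∑ j ∈ F, (if N - (t + 1) < j then n j else 0) := by
        rw [hstep1 t ht', ihA]
        have h1 : ∑ j ∈ F, (if N - (t + 1) < j then n j else 0)
            = ∑ j ∈ F, ((if N - t < j then n j else 0) + (if j = N - t then n j else 0)) := by
          refine Finset.sum_congr rfl fun j hj => ?_
          have hjN := Finset.mem_range.1 hj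
          split_ifs <;> omega
        rw [h1, Finset.sum_add_distrib, Finset.sum_ite_eq' F (N - t) n, if_pos hmem]
      refine ⟨hA, ?_⟩
      rw [hstep2 t, ihB, hA]
      have hmin : ∀ j ∈ F, min ((N - (t + 1) : ℕ) : ℤ) (j : ℤ) * n j
          = min ((N - t : ℕ) : ℤ) (j : ℤ) * n j - (if N - (t + 1) < j then n j else 0) := by
        intro j hj
        have hjN := Finset.mem_range.1 hj
        rcases le_or_gt (N - t) j with h | h
        · rw [min_eq_left (by omega : ((N - (t + 1) : ℕ) : ℤ) ≤ (j : ℤ)),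
            min_eq_left (by omega : ((N - t : ℕ) : ℤ) ≤ (j : ℤ)),
            if_pos (by omega : N - (t + 1) < j)]
          have : ((N - (t + 1) : ℕ) : ℤ) = ((N - t : ℕ) : ℤ) - 1 := by omega
          rw [this]; ring
        · rw [min_eq_right (by omega : (j : ℤ) ≤ ((N - (t + 1) : ℕ) : ℤ)),
            min_eq_right (by omega : (j : ℤ) ≤ ((N - t : ℕ) : ℤ)),
            if_neg (by omega : ¬ N - (t + 1) < j)]
          ring
      rw [Finset.sum_congr rfl hmin, Finset.sum_sub_distrib]
      ring
  -- the representative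
  refine ⟨fun i k => (J i (k + if i ∈ F then n i else 0)
      + 2 * ∑ j ∈ F, min (i : ℤ) (j : ℤ) * n j) - d, ?_, ?_⟩
  · exact Relation.EqvGen.trans _ _ _ (eqv_sigmaF n J F) (eqv_shift _ d)
  · intro i hi
    have hiN : i ≤ N := hle i hi
    have hiF : i ∈ F := Finset.mem_range.2 (by omega)
    have hxi : (st (N - i)).2 = d - 2 * ∑ j ∈ F, min (i : ℤ) (j : ℤ) * n j := by
      have h1 := (key (N - i) (by omega)).2
      rwa [show N - (N - i) = i from by omega] at h1
    have hbound : J i (n i) ≤ (st (N - i)).2 ∧ (st (N - i)).2 ≤ J i (n i + 1) := by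
      by_cases hiN' : i < N
      · have hni : n i = pickAux (J i) ((st (N - i)).2) := by
          rw [hn', nDef, if_pos ⟨hiN', hi⟩, hst]
        rw [hni]
        exact pickAux_spec (hex i hi hiN' ((st (N - i)).2))
      · have hiN'' : i = N := by omega
        have hni : n i = 0 := by
          rw [hn', nDef, if_neg (by tauto)]
        have hst0 : (st (N - i)).2 = J N 0 := by
          rw [show N - i = 0 from by omega]; rfl
        rw [hni, hst0, hiN'']
        refine ⟨le_refl _, ?_⟩
        have := (hJ N hmN).1 0
        simpa using this
      
    simp only [if_pos hiF]
    refine ⟨?_, ?_, ?_⟩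
    · have h1 := hbound.2
      rw [show (1 : ℤ) + n i = n i + 1 from by ring]
      linarith [hxi.symm.le, hxi.le]
    · intro k _ _
      have h1 := (hJ i hi).1 (k + n i)
      rw [show k + n i + 1 = k + 1 + n i from by ring] at h1
      linarith
    · have h1 := (hJ i hi).2 (n i)
      have h2 : ((m i : ℕ) : ℤ) + n i = n i + (m i : ℤ) := by ring
      rw [h2, h1]
      linarith [hbound.1, hxi.le]
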